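/- (Distribution of the common-token frequency in the mixture model.) Let α ∈ (0,1), let j* be a token in a finite vocabulary V, and for each teacher i ∈ [n] let p^{(i)} = α·δ_{j*} + (1-α)·r^{(i)}, where δ_{j*} is the point mass at j* and r^{(1)},…,r^{(n)} are probability distributions on V whose supports are pairwise disjoint and do not contain j*. Then under coordinated sampling the frequency c_{j*} of token j* is distributed as the following mixture: draw Y ~ Exp(α) (exponential with rate α), and conditioned on Y, c_{j*} ~ Binomial(n, e^{-Y(1-α)}). -/

import Mathlib

open MeasureTheory ProbabilityTheory

/-- `p` is a probability distribution (vector) on the finite token vocabulary `V`. -/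
def IsProbVec {V : Type*} [Fintype V] (p : V → ℝ) : Prop :=
  (∀ j, 0 ≤ p j) ∧ ∑ j, p j = 1

/-- The measure on the shared randomness `ρ = (u_j)_{j ∈ V}`:
i.i.d. rate-1 exponential random variables, one per token. -/
noncomputable def sharedMeasure (V : Type*) [Fintype V] : Measure (V → ℝ) :=
  Measure.pi fun _ => expMeasure 1

/-- A coordinated sample: a token maximizing `p j / u j` over `j ∈ V`
(an arbitrary maximizer in case of ties, which happen with probability zero). -/
noncomputable def coordSample {V : Type*} [Fintype V] [Nonempty V] (p : V → ℝ) (u : V → ℝ) : V :=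
  (Finset.exists_max_image Finset.univ (fun j => p j / u j) Finset.univ_nonempty).choose

/-- The frequency `c_j = #{i ∈ [n] : y_i = j}` of token `j` among the coordinated
samples `y_i = coordSample (p i) u` of the `n` teachers. -/
noncomputable def freq {V : Type*} [Fintype V] [Nonempty V] [DecidableEq V] {n : ℕ}
    (p : Fin n → V → ℝ) (u : V → ℝ) (j : V) : ℕ :=
  (Finset.univ.filter fun i : Fin n => coordSample (p i) u = j).card

section Auxiliary

open Real Set
open scoped ENNReal

instance : IsProbabilityMeasure (expMeasure 1) := isProbabilityMeasure_expMeasure one_pos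

lemma aux_coordSample_le {V : Type*} [Fintype V] [Nonempty V] (p u : V → ℝ) (h : V) :
    p h / u h ≤ p (coordSample p u) / u (coordSample p u) := by
  obtain ⟨-, h2⟩ := (Finset.exists_max_image Finset.univ (fun j => p j / u j)
    Finset.univ_nonempty).choose_spec
  exact h2 h (Finset.mem_univ h)

lemma aux_coordSample_eq {V : Type*} [Fintype V] [Nonempty V] (p u : V → ℝ) (j : V)
    (hlt : ∀ h, h ≠ j → p h / u h < p j / u j) : coordSample p u = j := by
  by_contra hne
  exact absurd (aux_coordSample_le p u j) (not_le.mpr (hlt _ hne))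

lemma aux_expMeasure_eq : expMeasure 1 = volume.withDensity (exponentialPDF 1) := rfl

lemma aux_expMeasure_null {s : Set ℝ} (hs : volume s = 0) : expMeasure 1 s = 0 :=
  withDensity_absolutelyContinuous _ _ hs

lemma aux_expMeasure_Iic_zero : expMeasure 1 (Iic 0) = 0 := by
  rw [aux_expMeasure_eq, withDensity_apply _ measurableSet_Iic]
  have h : (Iic (0:ℝ)) =ᵐ[volume] (Iio (0:ℝ)) := Iio_ae_eq_Iic.symm
  rw [setLIntegral_congr h]
  simpa using lintegral_exponentialPDF_of_nonpos (le_refl (0:ℝ)) (r := 1)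

lemma aux_expMeasure_Ioi {a : ℝ} (ha : 0 ≤ a) :
    expMeasure 1 (Ioi a) = ENNReal.ofReal (rexp (-a)) := by
  have h1 : expMeasure 1 (Iic a) = ENNReal.ofReal (1 - rexp (-a)) := by
    rw [aux_expMeasure_eq, withDensity_apply _ measurableSet_Iic,
      lintegral_exponentialPDF_eq_antiDeriv one_pos, if_pos ha, one_mul]
  have h2 := measure_compl (μ := expMeasure 1) (measurableSet_Iic (a := a)) (measure_ne_top _ _)
  rw [compl_Iic] at h2
  rw [h2, h1, measure_univ, ← ENNReal.ofReal_one,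
    ← ENNReal.ofReal_sub _ (by linarith [exp_le_one_iff.mpr (neg_nonpos.mpr ha), exp_nonneg (-a)])]
  norm_num

section PiMeasure

variable {ι : Type*} [Fintype ι] {n : ℕ}

/-- abbreviation for the product of exponential measures -/
noncomputable abbrev auxNu (ι : Type*) [Fintype ι] : Measure (ι → ℝ) :=
  Measure.pi fun _ : ι => expMeasure 1

lemma aux_nu_box (b : ι → ℝ) (hb : ∀ h, 0 ≤ b h) :
    auxNu ι (univ.pi fun h => Ioi (b h)) = ENNReal.ofReal (rexp (-(∑ h, b h))) := by
  rw [Measure.pi_pi]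
  have : ∀ h, expMeasure 1 (Ioi (b h)) = ENNReal.ofReal (rexp (-(b h))) :=
    fun h => aux_expMeasure_Ioi (hb h)
  simp_rw [this]
  rw [← ENNReal.ofReal_prod_of_nonneg (fun _ _ => (exp_nonneg _))]
  congr 1
  rw [← Real.exp_sum, ← Finset.sum_neg_distrib]

lemma aux_measurable_A (a : Fin n → ι → ℝ) (i : Fin n) :
    MeasurableSet {w : ι → ℝ | ∀ h, a i h < w h} := by
  have : {w : ι → ℝ | ∀ h, a i h < w h} = univ.pi fun h => Ioi (a i h) := by
    ext w; simp [Set.mem_pi]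
  rw [this]
  exact MeasurableSet.univ_pi fun h => measurableSet_Ioi

lemma aux_nu_inter_box (a : Fin n → ι → ℝ) (ha : ∀ i h, 0 ≤ a i h)
    (hd : ∀ i k : Fin n, i ≠ k → ∀ h, a i h = 0 ∨ a k h = 0) (T : Finset (Fin n)) :
    auxNu ι (⋂ i ∈ T, {w : ι → ℝ | ∀ h, a i h < w h})
      = ENNReal.ofReal (∏ i ∈ T, rexp (-(∑ h, a i h))) := by
  rcases T.eq_empty_or_nonempty with rfl | ⟨i₀, hi₀⟩
  · simp
  · have hset : (⋂ i ∈ T, {w : ι → ℝ | ∀ h, a i h < w h})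
        = univ.pi fun h => Ioi (∑ i ∈ T, a i h) := by
      ext w
      simp only [Set.mem_iInter, Set.mem_setOf_eq, Set.mem_pi, Set.mem_univ, Set.mem_Ioi,
        forall_true_left]
      constructor
      · intro H h
        by_cases hex : ∃ j ∈ T, a j h ≠ 0
        · obtain ⟨j, hjT, hj⟩ := hex
          rw [Finset.sum_eq_single_of_mem j hjT]
          · exact H j hjT h
          · intro kk hk hkj
            rcases hd kk j hkj h with h0 | h0
            · exact h0
            · exact absurd h0 hj
        · push_neg at hex
          rw [Finset.sum_eq_zero hex]
          exact lt_of_le_of_lt (ha i₀ h) (H i₀ hi₀ h)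
      · intro H i hi h
        exact lt_of_le_of_lt (Finset.single_le_sum (fun kk _ => ha kk h) hi) (H h)
    rw [hset, aux_nu_box _ (fun h => Finset.sum_nonneg fun i _ => ha i h)]
    congr 1
    rw [← Real.exp_sum]
    congr 1
    simp_rw [← Finset.sum_neg_distrib]
    rw [Finset.sum_comm]

lemma aux_nu_inter_compl (a : Fin n → ι → ℝ) (ha : ∀ i h, 0 ≤ a i h)
    (hd : ∀ i k : Fin n, i ≠ k → ∀ h, a i h = 0 ∨ a k h = 0) (U : Finset (Fin n)) :
    ∀ T : Finset (Fin n), Disjoint T U →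
    auxNu ι ((⋂ i ∈ T, {w : ι → ℝ | ∀ h, a i h < w h})
        ∩ ⋂ i ∈ U, {w : ι → ℝ | ∀ h, a i h < w h}ᶜ)
      = ENNReal.ofReal ((∏ i ∈ T, rexp (-(∑ h, a i h)))
          * ∏ i ∈ U, (1 - rexp (-(∑ h, a i h)))) := by
  set A : Fin n → Set (ι → ℝ) := fun i => {w : ι → ℝ | ∀ h, a i h < w h} with hA
  have hq0 : ∀ i : Fin n, 0 ≤ rexp (-(∑ h, a i h)) := fun i => exp_nonneg _
  have hq1 : ∀ i : Fin n, rexp (-(∑ h, a i h)) ≤ 1 := fun i =>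
    exp_le_one_iff.mpr (neg_nonpos.mpr (Finset.sum_nonneg fun h _ => ha i h))
  induction U using Finset.induction_on with
  | empty =>
    intro T _
    simpa using aux_nu_inter_box a ha hd T
  | @insert i U' hiU' IH =>
    intro T hTU
    have hiT : i ∉ T := fun hiT =>
      (Finset.disjoint_left.mp hTU hiT) (Finset.mem_insert_self i U')
    have hTU' : Disjoint T U' := hTU.mono_right (Finset.subset_insert i U')
    set X := ⋂ j ∈ T, A j with hX
    set Y := ⋂ j ∈ U', (A j)ᶜ with hY
    have hXm : MeasurableSet X :=
      MeasurableSet.biInter T.countable_toSet fun j _ => aux_measurable_A a j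
    have hYm : MeasurableSet Y :=
      MeasurableSet.biInter U'.countable_toSet fun j _ => (aux_measurable_A a j).compl
    have hstep : X ∩ ⋂ j ∈ insert i U', (A j)ᶜ = (X ∩ Y) \ ((X ∩ Y) ∩ A i) := by
      ext w
      simp only [hX, hY, Set.mem_inter_iff, Set.mem_iInter, Set.mem_compl_iff, Set.mem_diff,
        Finset.mem_insert, Set.mem_setOf_eq]
      constructor
      · rintro ⟨h1, h2⟩
        refine ⟨⟨h1, fun j hj => h2 j (Or.inr hj)⟩, ?_⟩
        rintro ⟨-, hAi⟩
        exact h2 i (Or.inl rfl) hAi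
      · rintro ⟨⟨h1, h2⟩, h3⟩
        refine ⟨h1, fun j hj => ?_⟩
        rcases hj with rfl | hj
        · exact fun hAj => h3 ⟨⟨h1, h2⟩, hAj⟩
        · exact h2 j hj
    rw [hstep, measure_diff inter_subset_left
        (((hXm.inter hYm).inter (aux_measurable_A a i)).nullMeasurableSet) (measure_ne_top _ _)]
    have e1 : auxNu ι (X ∩ Y) = ENNReal.ofReal ((∏ j ∈ T, rexp (-(∑ h, a j h)))
        * ∏ j ∈ U', (1 - rexp (-(∑ h, a j h)))) := IH T hTU'
    have hins : (X ∩ Y) ∩ A i = (⋂ j ∈ insert i T, A j) ∩ Y := by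
      ext w
      simp only [Set.mem_inter_iff, Set.mem_iInter, Finset.mem_insert, hX]
      constructor
      · rintro ⟨⟨h1, h2⟩, h3⟩
        exact ⟨fun j hj => hj.elim (fun e => e ▸ h3) (h1 j), h2⟩
      · rintro ⟨h1, h2⟩
        exact ⟨⟨fun j hj => h1 j (Or.inr hj), h2⟩, h1 i (Or.inl rfl)⟩
    have e2 : auxNu ι ((X ∩ Y) ∩ A i) = ENNReal.ofReal ((∏ j ∈ insert i T, rexp (-(∑ h, a j h)))
        * ∏ j ∈ U', (1 - rexp (-(∑ h, a j h)))) := by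
      rw [hins]
      exact IH (insert i T) (Finset.disjoint_left.mpr (by
        intro x hx hxU'
        rcases Finset.mem_insert.mp hx with rfl | hxT
        · exact hiU' hxU'
        · exact Finset.disjoint_left.mp hTU' hxT hxU'))
    rw [e1, e2, Finset.prod_insert hiT, Finset.prod_insert hiU',
      ← ENNReal.ofReal_sub _ (by
        have h2 : (0:ℝ) ≤ ∏ j ∈ T, rexp (-(∑ h, a j h)) :=
          Finset.prod_nonneg fun j _ => hq0 j
        have h3 : (0:ℝ) ≤ ∏ j ∈ U', (1 - rexp (-(∑ h, a j h))) :=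
          Finset.prod_nonneg fun j _ => by linarith [hq1 j, hq0 j]
        have h4 := hq0 i
        positivity)]
    congr 1
    ring

open Classical in
lemma aux_nu_count (a : Fin n → ι → ℝ) (ha : ∀ i h, 0 ≤ a i h)
    (hd : ∀ i k : Fin n, i ≠ k → ∀ h, a i h = 0 ∨ a k h = 0) (s : ℝ)
    (hs : ∀ i, ∑ h, a i h = s) (k : ℕ) :
    auxNu ι {w : ι → ℝ | (Finset.univ.filter fun i : Fin n => ∀ h, a i h < w h).card = k}
      = ENNReal.ofReal ((n.choose k : ℝ) * rexp (-s) ^ k * (1 - rexp (-s)) ^ (n - k)) := by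
  set A : Fin n → Set (ι → ℝ) := fun i => {w : ι → ℝ | ∀ h, a i h < w h} with hA
  set f : Finset (Fin n) → Set (ι → ℝ) :=
    fun T => (⋂ i ∈ T, A i) ∩ ⋂ i ∈ Tᶜ, (A i)ᶜ with hf
  have hEq : {w : ι → ℝ | (Finset.univ.filter fun i : Fin n => ∀ h, a i h < w h).card = k}
      = ⋃ T ∈ Finset.powersetCard k (Finset.univ : Finset (Fin n)), f T := by
    ext w
    simp only [Set.mem_setOf_eq, Set.mem_iUnion, hf, Set.mem_inter_iff, Set.mem_iInter,
      Set.mem_compl_iff, Finset.mem_powersetCard_univ, hA]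
    constructor
    · intro hk
      refine ⟨Finset.univ.filter fun i : Fin n => ∀ h, a i h < w h, hk, ?_, ?_⟩
      · intro i hi
        exact (Finset.mem_filter.mp hi).2
      · intro i hi
        exact fun hw => (Finset.mem_compl.mp hi) (Finset.mem_filter.mpr ⟨Finset.mem_univ _, hw⟩)
    · rintro ⟨T, hTk, h1, h2⟩
      have : (Finset.univ.filter fun i : Fin n => ∀ h, a i h < w h) = T := by
        ext i
        simp only [Finset.mem_filter, Finset.mem_univ, true_and]
        constructor
        · intro hw
          by_contra hiT
          exact h2 i (Finset.mem_compl.mpr hiT) hw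
        · exact fun hi => h1 i hi
      rw [this]; exact hTk
  have hfm : ∀ T : Finset (Fin n), MeasurableSet (f T) := fun T =>
    (MeasurableSet.biInter T.countable_toSet fun j _ => aux_measurable_A a j).inter
      (MeasurableSet.biInter Tᶜ.countable_toSet fun j _ => (aux_measurable_A a j).compl)
  have hdisj : Set.PairwiseDisjoint
      ↑(Finset.powersetCard k (Finset.univ : Finset (Fin n))) f := by
    intro T hT T' hT' hne
    rw [Finset.mem_coe, Finset.mem_powersetCard_univ] at hT hT'
    have : ∃ i, i ∈ T ∧ i ∉ T' := by
      by_contra hc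
      push_neg at hc
      exact hne
        (Finset.eq_of_subset_of_card_le (fun i hi => hc i hi) (hT'.trans hT.symm ▸ le_refl _))
    obtain ⟨i, hiT, hiT'⟩ := this
    refine Set.disjoint_left.mpr fun w hw hw' => ?_
    have h1 : w ∈ A i := by
      have := hw.1; simp only [Set.mem_iInter] at this; exact this i hiT
    have h2 : w ∉ A i := by
      have := hw'.2; simp only [Set.mem_iInter] at this
      exact this i (Finset.mem_compl.mpr hiT')
    exact h2 h1
  rw [hEq, measure_biUnion_finset hdisj fun T _ => hfm T]
  have hval : ∀ T ∈ Finset.powersetCard k (Finset.univ : Finset (Fin n)),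
      auxNu ι (f T) = ENNReal.ofReal (rexp (-s) ^ k * (1 - rexp (-s)) ^ (n - k)) := by
    intro T hT
    have hTk : T.card = k := Finset.mem_powersetCard_univ.mp hT
    rw [hf]
    rw [aux_nu_inter_compl a ha hd Tᶜ T (disjoint_compl_right)]
    congr 1
    simp_rw [hs]
    rw [Finset.prod_const, Finset.prod_const, hTk, Finset.card_compl, hTk, Fintype.card_fin]
  rw [Finset.sum_congr rfl hval, Finset.sum_const, Finset.card_powersetCard,
    Finset.card_univ, Fintype.card_fin, nsmul_eq_mul]
  rw [← ENNReal.ofReal_natCast (n.choose k), ← ENNReal.ofReal_mul (by positivity)]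
  ring_nf

end PiMeasure

section Split

variable {V : Type*} [Fintype V] [DecidableEq V] (jstar : V)

/-- Reassembling of shared randomness from the coordinate at `jstar` and the others. -/
def auxGmap : ℝ × ({h : V // ¬ h = jstar} → ℝ) → (V → ℝ) :=
  fun tw h => if hh : h = jstar then tw.1 else tw.2 ⟨h, hh⟩

instance : Unique {h : V // h = jstar} :=
  ⟨⟨⟨jstar, rfl⟩⟩, fun a => Subtype.ext a.2⟩

lemma auxGmap_measurePreserving :
    MeasurePreserving (auxGmap jstar)
      ((expMeasure 1).prod (Measure.pi fun _ : {h : V // ¬ h = jstar} => expMeasure 1))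
      (sharedMeasure V) := by
  have h1 := (measurePreserving_piEquivPiSubtypeProd (fun _ : V => expMeasure 1)
      (fun h => h = jstar)).symm (MeasurableEquiv.piEquivPiSubtypeProd (fun _ : V => ℝ)
      (fun h => h = jstar))
  have h2 : MeasurePreserving
      (Prod.map (⇑(MeasurableEquiv.funUnique {h : V // h = jstar} ℝ).symm)
        (id : ({h : V // ¬ h = jstar} → ℝ) → _))
      ((expMeasure 1).prod (Measure.pi fun _ : {h : V // ¬ h = jstar} => expMeasure 1))
      ((Measure.pi fun _ : {h : V // h = jstar} => expMeasure 1).prod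
        (Measure.pi fun _ : {h : V // ¬ h = jstar} => expMeasure 1)) :=
    ((measurePreserving_funUnique (expMeasure 1) _).symm
      (MeasurableEquiv.funUnique _ ℝ)).prod (MeasurePreserving.id _)
  have hpi : (@Measure.pi {h : V // h = jstar} (fun _ => ℝ) (Fintype.subtypeEq jstar)
      (fun _ => inferInstance) fun _ => expMeasure 1)
      = (@Measure.pi {h : V // h = jstar} (fun _ => ℝ) (Subtype.fintype _)
      (fun _ => inferInstance) fun _ => expMeasure 1) := by
    congr 1
    exact Subsingleton.elim _ _
  rw [hpi] at h2
  have := h1.comp h2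
  convert this using 1
  all_goals rfl

lemma aux_null_rel {h : V} (hne : ¬ h = jstar) (e d : ℝ) (he : e ≠ 0) :
    sharedMeasure V {u | e * u h = d * u jstar} = 0 := by
  have hmS : MeasurableSet {u : V → ℝ | e * u h = d * u jstar} :=
    measurableSet_eq_fun (by fun_prop)
      (by fun_prop)
  rw [← (auxGmap_measurePreserving jstar).measure_preimage hmS.nullMeasurableSet]
  have hpre : auxGmap jstar ⁻¹' {u : V → ℝ | e * u h = d * u jstar}
      = {tw : ℝ × ({h : V // ¬ h = jstar} → ℝ) | e * tw.2 ⟨h, hne⟩ = d * tw.1} := by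
    ext ⟨t, w⟩
    simp [auxGmap, hne]
  rw [hpre]
  have hm2 : MeasurableSet
      {tw : ℝ × ({h : V // ¬ h = jstar} → ℝ) | e * tw.2 ⟨h, hne⟩ = d * tw.1} :=
    measurableSet_eq_fun (by fun_prop)
      (by fun_prop)
  rw [Measure.prod_apply hm2]
  have hz : ∀ t : ℝ, (Measure.pi fun _ : {h : V // ¬ h = jstar} => expMeasure 1)
      (Prod.mk t ⁻¹'
        {tw : ℝ × ({h : V // ¬ h = jstar} → ℝ) | e * tw.2 ⟨h, hne⟩ = d * tw.1}) = 0 := by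
    intro t
    have hst : (Prod.mk t ⁻¹'
        {tw : ℝ × ({h : V // ¬ h = jstar} → ℝ) | e * tw.2 ⟨h, hne⟩ = d * tw.1})
        = Function.eval (⟨h, hne⟩ : {h : V // ¬ h = jstar}) ⁻¹' ({d * t / e} : Set ℝ) := by
      ext w
      simp only [Set.mem_preimage, Set.mem_setOf_eq, Function.eval, Set.mem_singleton_iff]
      rw [eq_div_iff he, mul_comm (w _) e]
    rw [hst]
    exact Measure.pi_eval_preimage_null _ (aux_expMeasure_null (volume_singleton))
  simp only [hz, lintegral_zero]

omit [DecidableEq V] in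
lemma aux_null_eval {s : Set ℝ} (hs : expMeasure 1 s = 0) (h : V) :
    sharedMeasure V (Function.eval h ⁻¹' s) = 0 :=
  Measure.pi_eval_preimage_null _ hs

end Split

lemma aux_lintegral_Ioi_scale {f : ℝ → ℝ≥0∞} (hf : Measurable f) {α : ℝ} (hα : 0 < α) :
    ∫⁻ t in Ioi (0:ℝ), f t = ∫⁻ y in Ioi (0:ℝ), ENNReal.ofReal α * f (α * y) := by
  have hmap : Measure.map (fun y : ℝ => α * y) volume = ENNReal.ofReal |α⁻¹| • volume :=
    Real.map_volume_mul_left (ne_of_gt hα)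
  have hind : ∀ y : ℝ, (Ioi (0:ℝ)).indicator f (α * y)
      = (Ioi (0:ℝ)).indicator (fun y => f (α * y)) y := by
    intro y
    by_cases hy : y ∈ Ioi (0:ℝ)
    · rw [Set.indicator_of_mem hy, Set.indicator_of_mem (by exact mul_pos hα hy)]
    · rw [Set.indicator_of_notMem hy, Set.indicator_of_notMem (by
        simp only [Set.mem_Ioi, not_lt] at hy ⊢
        exact mul_nonpos_of_nonneg_of_nonpos hα.le hy)]
  calc ∫⁻ t in Ioi (0:ℝ), f t
      = ∫⁻ t, (Ioi (0:ℝ)).indicator f t := (lintegral_indicator measurableSet_Ioi f).symm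
    _ = (ENNReal.ofReal α * ENNReal.ofReal |α⁻¹|) * ∫⁻ t, (Ioi (0:ℝ)).indicator f t := by
        rw [← ENNReal.ofReal_mul hα.le, abs_of_pos (inv_pos.mpr hα), mul_inv_cancel₀ (ne_of_gt hα)]
        simp
    _ = ENNReal.ofReal α * ∫⁻ t, (Ioi (0:ℝ)).indicator f t ∂(ENNReal.ofReal |α⁻¹| • volume) := by
        rw [lintegral_smul_measure]; ring
    _ = ENNReal.ofReal α * ∫⁻ y, (Ioi (0:ℝ)).indicator f (α * y) := by
        rw [← hmap, lintegral_map (hf.indicator measurableSet_Ioi) (measurable_const_mul α)]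
    _ = ∫⁻ y, ENNReal.ofReal α * (Ioi (0:ℝ)).indicator (fun y => f (α * y)) y := by
        simp_rw [hind]
        rw [lintegral_const_mul _ (Measurable.indicator
          (hf.comp (measurable_const_mul α)) measurableSet_Ioi :
          Measurable ((Ioi (0:ℝ)).indicator (fun y => f (α * y))))]
    _ = ∫⁻ y in Ioi (0:ℝ), ENNReal.ofReal α * f (α * y) := by
        rw [← lintegral_indicator measurableSet_Ioi]
        congr 1
        funext y
        by_cases hy : y ∈ Ioi (0:ℝ) <;>
          simp [Set.indicator_of_mem, Set.indicator_of_notMem, hy]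

end Auxiliary

theorem freq_mixture_distribution {V : Type*} [Fintype V] [Nonempty V] [DecidableEq V]
    {n : ℕ} (α : ℝ) (hα : α ∈ Set.Ioo (0:ℝ) 1) (jstar : V)
    (r : Fin n → V → ℝ) (hr : ∀ i, IsProbVec (r i))
    (hdisj : ∀ i k : Fin n, i ≠ k → ∀ h : V, r i h = 0 ∨ r k h = 0)
    (hjstar : ∀ i, r i jstar = 0)
    (p : Fin n → V → ℝ)
    (hpdef : ∀ i h, p i h = α * (if h = jstar then 1 else 0) + (1 - α) * r i h) :
    ∀ k : ℕ,
      sharedMeasure V {u | freq p u jstar = k}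
        = ∫⁻ y in Set.Ioi (0:ℝ),
            ENNReal.ofReal (α * Real.exp (-(α * y)) *
              ((n.choose k : ℝ) * Real.exp (-(y * (1 - α))) ^ k *
                (1 - Real.exp (-(y * (1 - α)))) ^ (n - k))) := by
  classical
  intro k
  obtain ⟨h0α, h1α⟩ := hα
  have h1α' : (0:ℝ) < 1 - α := by linarith
  -- the clean winning predicate and event
  set Win : Fin n → (V → ℝ) → Prop :=
    fun i u => ∀ h, ¬ h = jstar → u jstar * ((1 - α) * r i h) < α * u h with hWin
  set S₂ : Set (V → ℝ) :=
    {u | (Finset.univ.filter fun i : Fin n => Win i u).card = k} with hS₂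
  have hpj : ∀ i, p i jstar = α := fun i => by rw [hpdef]; simp [hjstar i]
  have hph : ∀ i h, ¬ h = jstar → p i h = (1 - α) * r i h := fun i h hh => by
    rw [hpdef]; simp [hh]
  -- the good set where ties and nonpositive coordinates are excluded
  set G : Set (V → ℝ) := {u | (∀ h, 0 < u h) ∧ ∀ i h, ¬ h = jstar → r i h ≠ 0 →
      ¬ (α * u h = ((1 - α) * r i h) * u jstar)} with hG
  have hGnull : sharedMeasure V Gᶜ = 0 := by
    have hsub : Gᶜ ⊆ (⋃ h : V, Function.eval h ⁻¹' (Set.Iic (0:ℝ))) ∪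
        ⋃ i : Fin n, ⋃ h : V, (if (¬ h = jstar) ∧ r i h ≠ 0 then
          {u : V → ℝ | α * u h = ((1 - α) * r i h) * u jstar} else ∅) := by
      intro u hu
      simp only [hG, Set.mem_compl_iff, Set.mem_setOf_eq, not_and_or] at hu
      rcases hu with hu | hu
      · push_neg at hu
        obtain ⟨h, hh⟩ := hu
        exact Or.inl (Set.mem_iUnion.mpr ⟨h, by simpa using hh⟩)
      · push_neg at hu
        obtain ⟨i, h, hne, hr0, heq⟩ := hu
        refine Or.inr (Set.mem_iUnion.mpr ⟨i, Set.mem_iUnion.mpr ⟨h, ?_⟩⟩)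
        rw [if_pos ⟨hne, hr0⟩]
        exact heq
    refine measure_mono_null hsub (measure_union_null ?_ ?_)
    · exact measure_iUnion_null fun h => aux_null_eval aux_expMeasure_Iic_zero h
    · refine measure_iUnion_null fun i => measure_iUnion_null fun h => ?_
      split_ifs with hc
      · exact aux_null_rel jstar hc.1 α ((1 - α) * r i h) (ne_of_gt h0α)
      · simp
  have hae : {u | freq p u jstar = k} =ᵐ[sharedMeasure V] S₂ := by
    have hGae : ∀ᵐ u ∂(sharedMeasure V), u ∈ G := by
      rw [ae_iff]
      exact hGnull
    filter_upwards [hGae] with u hu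
    obtain ⟨hupos, hurel⟩ := hu
    have hiff : ∀ i : Fin n, coordSample (p i) u = jstar ↔ Win i u := by
      intro i
      constructor
      · intro hcs h hne
        have hle := aux_coordSample_le (p i) u h
        rw [hcs, hpj i, hph i h hne] at hle
        have hle' : (1 - α) * r i h * u jstar ≤ α * u h :=
          (div_le_div_iff₀ (hupos h) (hupos jstar)).mp hle
        rcases eq_or_ne (r i h) 0 with h0 | h0
        · rw [h0]
          have := hupos h
          have : 0 < α * u h := mul_pos h0α this
          linarith
        · have hne2 := hurel i h hne h0
          have hlt : (1 - α) * r i h * u jstar < α * u h :=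
            lt_of_le_of_ne hle' (fun hh => hne2 hh.symm)
          linarith
      · intro hw
        apply aux_coordSample_eq
        intro h hne
        rw [hpj i, hph i h hne]
        rw [div_lt_div_iff₀ (hupos h) (hupos jstar)]
        have := hw h hne
        linarith
    have hfil : (Finset.univ.filter fun i : Fin n => coordSample (p i) u = jstar)
        = Finset.univ.filter fun i : Fin n => Win i u := by
      ext i
      simp only [Finset.mem_filter, Finset.mem_univ, true_and]
      exact hiff i
    have hfreq : freq p u jstar = (Finset.univ.filter fun i : Fin n => Win i u).card := by
      unfold freq
      rw [hfil]
    show (freq p u jstar = k) = ((Finset.univ.filter fun i : Fin n => Win i u).card = k)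
    rw [hfreq]
  rw [measure_congr hae]
  -- measurability of the clean event
  have hWm : ∀ i : Fin n, MeasurableSet {u : V → ℝ | Win i u} := by
    intro i
    have hrw : {u : V → ℝ | Win i u} = ⋂ h : V, ⋂ _ : ¬ h = jstar,
        {u : V → ℝ | u jstar * ((1 - α) * r i h) < α * u h} := by
      ext u
      simp [hWin, Set.mem_iInter]
    rw [hrw]
    exact MeasurableSet.iInter fun h => MeasurableSet.iInter fun _ =>
      measurableSet_lt (by fun_prop)
        (by fun_prop)
  have hS₂m : MeasurableSet S₂ := by
    have hcrw : (fun u : V → ℝ => (Finset.univ.filter fun i : Fin n => Win i u).card)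
        = fun u => ∑ i : Fin n, if Win i u then 1 else 0 := by
      funext u
      rw [Finset.card_filter]
    have hcount : Measurable fun u : V → ℝ =>
        (Finset.univ.filter fun i : Fin n => Win i u).card := by
      rw [hcrw]
      exact Finset.measurable_sum _ fun i _ =>
        Measurable.ite (hWm i) measurable_const measurable_const
    exact hcount (measurableSet_singleton k)
  -- split off the coordinate at jstar
  have hgp := auxGmap_measurePreserving (V := V) jstar
  rw [← hgp.measure_preimage hS₂m.nullMeasurableSet,
    Measure.prod_apply (hgp.measurable hS₂m)]
  -- sum of the residual masses over the non-jstar coordinates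
  have hsum1 : ∀ i : Fin n, ∑ h' : {h : V // ¬ h = jstar}, r i ↑h' = 1 := by
    intro i
    have h1 : ∑ h ∈ (Finset.univ : Finset V).erase jstar, r i h
        = ∑ h' : {h : V // ¬ h = jstar}, r i ↑h' :=
      Finset.sum_subtype _ (fun x => by simp) _
    have h2 : ∑ h ∈ (Finset.univ : Finset V).erase jstar, r i h + r i jstar
        = ∑ h : V, r i h := Finset.sum_erase_add _ _ (Finset.mem_univ jstar)
    rw [hjstar i, add_zero, (hr i).2] at h2
    rw [← h1, h2]
  -- the slice measure for t ≥ 0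
  have hslice : ∀ t : ℝ, 0 ≤ t →
      (Measure.pi fun _ : {h : V // ¬ h = jstar} => expMeasure 1)
        (Prod.mk t ⁻¹' (auxGmap jstar ⁻¹' S₂))
      = ENNReal.ofReal ((n.choose k : ℝ) * Real.exp (-(t * (1 - α) / α)) ^ k
          * (1 - Real.exp (-(t * (1 - α) / α))) ^ (n - k)) := by
    intro t ht
    set a : Fin n → {h : V // ¬ h = jstar} → ℝ :=
      fun i h' => t * (1 - α) / α * r i ↑h' with hadef
    have hseteq : (Prod.mk t ⁻¹' (auxGmap jstar ⁻¹' S₂))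
        = {w : {h : V // ¬ h = jstar} → ℝ |
            (Finset.univ.filter fun i : Fin n => ∀ h', a i h' < w h').card = k} := by
      ext w
      have hg1 : auxGmap jstar (t, w) jstar = t := by simp [auxGmap]
      have hg2 : ∀ h' : {h : V // ¬ h = jstar}, auxGmap jstar (t, w) ↑h' = w h' := by
        rintro ⟨h, hne⟩
        simp [auxGmap, hne]
      have hiff2 : ∀ i : Fin n, Win i (auxGmap jstar (t, w)) ↔ (∀ h', a i h' < w h') := by
        intro i
        constructor
        · intro hwin h'
          have h3 := hwin ↑h' h'.2
          rw [hg1, hg2 h'] at h3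
          have h4 : t * (1 - α) / α * r i ↑h' < w h' := by
            rw [div_mul_eq_mul_div, div_lt_iff₀ h0α]
            linarith
          exact h4
        · intro hq h hne
          have h3 := hq ⟨h, hne⟩
          have h4 : t * (1 - α) / α * r i h < w ⟨h, hne⟩ := h3
          rw [div_mul_eq_mul_div, div_lt_iff₀ h0α] at h4
          rw [hg1, hg2 ⟨h, hne⟩]
          linarith
      show (auxGmap jstar (t, w) ∈ S₂) ↔ _
      rw [hS₂]
      simp only [Set.mem_setOf_eq]
      constructor
      · intro hk
        rw [← hk]
        congr 1
        ext i
        simp only [Finset.mem_filter, Finset.mem_univ, true_and]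
        exact (hiff2 i).symm
      · intro hk
        rw [← hk]
        congr 1
        ext i
        simp only [Finset.mem_filter, Finset.mem_univ, true_and]
        exact hiff2 i
    rw [hseteq]
    exact aux_nu_count a
      (fun i h' => mul_nonneg (by positivity) ((hr i).1 ↑h'))
      (fun i k' hik h' => by
        rcases hdisj i k' hik ↑h' with h0 | h0
        · left; rw [hadef]; simp [h0]
        · right; rw [hadef]; simp [h0])
      (t * (1 - α) / α)
      (fun i => by rw [hadef]; rw [← Finset.mul_sum, hsum1 i, mul_one])
      k
  -- replace the slice integrand a.e. and compute the integral
  set Φ : ℝ → ENNReal := fun t => ENNReal.ofReal ((n.choose k : ℝ)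
      * Real.exp (-(t * (1 - α) / α)) ^ k
      * (1 - Real.exp (-(t * (1 - α) / α))) ^ (n - k)) with hΦdef
  have hexpm : Measurable fun t : ℝ => Real.exp (-(t * (1 - α) / α)) :=
    Real.measurable_exp.comp (((measurable_id.mul_const (1 - α)).div_const α).neg)
  have hΦm : Measurable Φ :=
    Measurable.ennreal_ofReal ((measurable_const.mul (hexpm.pow_const k)).mul
      ((measurable_const.sub hexpm).pow_const (n - k)))
  have haet : ∀ᵐ t ∂(expMeasure 1), 0 ≤ t := by
    rw [ae_iff]
    have hset : {t : ℝ | ¬ 0 ≤ t} = Set.Iio 0 := by ext t; simp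
    rw [hset]
    exact measure_mono_null Set.Iio_subset_Iic_self aux_expMeasure_Iic_zero
  have h5 : ∫⁻ t, (Measure.pi fun _ : {h : V // ¬ h = jstar} => expMeasure 1)
        (Prod.mk t ⁻¹' (auxGmap jstar ⁻¹' S₂)) ∂(expMeasure 1)
      = ∫⁻ t, Φ t ∂(expMeasure 1) := by
    refine lintegral_congr_ae ?_
    filter_upwards [haet] with t ht
    exact hslice t ht
  rw [h5]
  have hpdfm : Measurable (exponentialPDF 1) := by
    unfold exponentialPDF
    exact (measurable_exponentialPDFReal 1).ennreal_ofReal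
  rw [aux_expMeasure_eq, lintegral_withDensity_eq_lintegral_mul _ hpdfm hΦm]
  rw [← lintegral_add_compl (exponentialPDF 1 * Φ) (measurableSet_Ioi (a := (0:ℝ)))]
  have hIic : ∫⁻ t in (Set.Ioi (0:ℝ))ᶜ, (exponentialPDF 1 * Φ) t = 0 := by
    rw [Set.compl_Ioi]
    rw [setLIntegral_congr (Iio_ae_eq_Iic (a := (0:ℝ))).symm]
    have hz : ∀ t ∈ Set.Iio (0:ℝ), (exponentialPDF 1 * Φ) t = (fun _ => (0:ENNReal)) t :=
      fun t ht => by simp [Pi.mul_apply, exponentialPDF_of_neg (r := 1) ht]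
    rw [setLIntegral_congr_fun_ae measurableSet_Iio (ae_of_all _ hz), lintegral_zero]
  rw [hIic, add_zero]
  set F : ℝ → ENNReal := fun t => ENNReal.ofReal (Real.exp (-t) * ((n.choose k : ℝ)
      * Real.exp (-(t * (1 - α) / α)) ^ k
      * (1 - Real.exp (-(t * (1 - α) / α))) ^ (n - k))) with hFdef
  have hIoi : ∀ t ∈ Set.Ioi (0:ℝ), (exponentialPDF 1 * Φ) t = F t := by
    intro t ht
    rw [Pi.mul_apply, exponentialPDF_of_nonneg (le_of_lt ht), hΦdef, hFdef]
    rw [← ENNReal.ofReal_mul (by positivity)]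
    congr 2
    rw [one_mul, one_mul]
  rw [setLIntegral_congr_fun_ae measurableSet_Ioi (ae_of_all _ hIoi)]
  have hFm : Measurable F := by
    refine Measurable.ennreal_ofReal ?_
    exact (Real.measurable_exp.comp measurable_neg).mul
      ((measurable_const.mul (hexpm.pow_const k)).mul
        ((measurable_const.sub hexpm).pow_const (n - k)))
  rw [aux_lintegral_Ioi_scale hFm h0α]
  refine setLIntegral_congr_fun_ae measurableSet_Ioi (ae_of_all _ (fun y hy => ?_))
  rw [hFdef]
  have harg : α * y * (1 - α) / α = y * (1 - α) := by
    rw [div_eq_iff (ne_of_gt h0α)]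
    ring
  simp only [harg]
  rw [← ENNReal.ofReal_mul h0α.le]
  congr 1
  ring
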